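/- If all N agents have identical LMGFs Λ_k = Λ (strictly convex, Λ(0) = 0, Λ'(0) > 0, unique negative zero t₀ < 0), then the uniform weight vector π = (1/N)·𝟙 is the unique maximizer of Φ(π) = −inf_t ∑_k φ(π_k t), and the maximal value is N·Φ₁, where Φ₁ = −inf_t φ(t) is the single-agent exponent. -/

import Mathlib

section AuxIdenticalAgents

variable {Λ : ℝ → ℝ} {t0 : ℝ} {φ : ℝ → ℝ}

private lemma aux_pos_pos (hconv : StrictConvexOn ℝ Set.univ Λ) (h0 : Λ 0 = 0)
    (ht0 : t0 < 0) (hzero : Λ t0 = 0) {t : ℝ} (ht : 0 < t) : 0 < Λ t := by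
  have hne : t0 ≠ t := by linarith
  have hden : (0:ℝ) < t - t0 := by linarith
  have key := hconv.2 (Set.mem_univ t0) (Set.mem_univ t) hne
    (show (0:ℝ) < t / (t - t0) by positivity)
    (show (0:ℝ) < -t0 / (t - t0) from div_pos (by linarith) hden)
    (show t / (t - t0) + -t0 / (t - t0) = 1 by field_simp; ring)
  have h1 : (t / (t - t0)) • t0 + (-t0 / (t - t0)) • t = 0 := by
    simp only [smul_eq_mul]; field_simp; ring
  rw [h1, h0, hzero] at key
  have hk : 0 < -t0 / (t - t0) * Λ t := by simpa using key
  have hb : (0:ℝ) < -t0 / (t - t0) := div_pos (by linarith) hden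
  nlinarith

private lemma aux_neg_mid (hconv : StrictConvexOn ℝ Set.univ Λ) (h0 : Λ 0 = 0)
    (ht0 : t0 < 0) (hzero : Λ t0 = 0) {t : ℝ} (h1 : t0 < t) (h2 : t < 0) : Λ t < 0 := by
  have hne : t0 ≠ (0:ℝ) := by linarith
  have ha : (0:ℝ) < t / t0 := div_pos_of_neg_of_neg h2 ht0
  have ha1 : t / t0 < 1 := by rw [div_lt_one_of_neg ht0]; linarith
  have key := hconv.2 (Set.mem_univ t0) (Set.mem_univ 0) hne ha
    (show (0:ℝ) < 1 - t / t0 by linarith)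
    (show t / t0 + (1 - t / t0) = 1 by ring)
  have h1' : (t / t0) • t0 + (1 - t / t0) • (0:ℝ) = t := by
    simp only [smul_eq_mul]; field_simp; ring
  rw [h1', h0, hzero] at key
  simpa using key

private lemma aux_pos_neg (hconv : StrictConvexOn ℝ Set.univ Λ) (h0 : Λ 0 = 0)
    (ht0 : t0 < 0) (hzero : Λ t0 = 0) {t : ℝ} (ht : t < t0) : 0 < Λ t := by
  have hne : t ≠ (0:ℝ) := by linarith
  have ha : (0:ℝ) < t0 / t := div_pos_of_neg_of_neg ht0 (by linarith)
  have ha1 : t0 / t < 1 := by rw [div_lt_one_of_neg (by linarith)]; linarith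
  have key := hconv.2 (Set.mem_univ t) (Set.mem_univ 0) hne ha
    (show (0:ℝ) < 1 - t0 / t by linarith)
    (show t0 / t + (1 - t0 / t) = 1 by ring)
  have h1' : (t0 / t) • t + (1 - t0 / t) • (0:ℝ) = t0 := by
    simp only [smul_eq_mul]; field_simp; ring
  rw [h1', h0, hzero] at key
  simp only [smul_eq_mul, mul_zero, add_zero] at key
  nlinarith

/-- The continuous extension of `τ ↦ Λ τ / τ`. -/
noncomputable def auxF (Λ : ℝ → ℝ) : ℝ → ℝ := fun τ => if τ = 0 then deriv Λ 0 else Λ τ / τ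

private lemma auxF_cont (hdiff : Differentiable ℝ Λ) (h0 : Λ 0 = 0) :
    Continuous (auxF Λ) := by
  rw [continuous_iff_continuousAt]
  intro x
  rcases eq_or_ne x 0 with rfl | hx
  · rw [ContinuousAt, ← nhdsNE_sup_pure (0:ℝ), Filter.tendsto_sup]
    constructor
    · have hs : Filter.Tendsto (slope Λ 0) (nhdsWithin 0 {(0:ℝ)}ᶜ) (nhds (deriv Λ 0)) :=
        hasDerivAt_iff_tendsto_slope.mp (hdiff 0).hasDerivAt
      have he : auxF Λ 0 = deriv Λ 0 := by simp [auxF]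
      rw [he]
      refine hs.congr' ?_
      filter_upwards [self_mem_nhdsWithin] with τ hτ
      have hτ0 : τ ≠ 0 := hτ
      simp [slope, auxF, hτ0, h0, div_eq_inv_mul]
    · exact tendsto_pure_nhds (auxF Λ) 0
  · have hca : ContinuousAt (fun τ => Λ τ / τ) x :=
      (hdiff.continuous.continuousAt).div continuousAt_id hx
    refine hca.congr ?_
    filter_upwards [isOpen_compl_singleton.mem_nhds hx] with τ (hτ : τ ≠ 0)
    simp [auxF, hτ]

private lemma auxF_phi (φ : ℝ → ℝ)
    (hφ : ∀ t, φ t = ∫ τ in (0:ℝ)..t, Λ τ / τ) (t : ℝ) :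
    φ t = ∫ τ in (0:ℝ)..t, auxF Λ τ := by
  rw [hφ]
  apply intervalIntegral.integral_congr_ae
  filter_upwards [MeasureTheory.measure_eq_zero_iff_ae_notMem.mp (Real.volume_singleton (a := 0))]
    with τ hτ _
  have hτ0 : τ ≠ 0 := fun h => hτ (by simp [h])
  simp [auxF, hτ0]

private lemma auxF_deriv (hcont : Continuous (auxF Λ))
    (hφ' : ∀ t, φ t = ∫ τ in (0:ℝ)..t, auxF Λ τ) (t : ℝ) :
    HasDerivAt φ (auxF Λ t) t := by
  have h := (hcont.integral_hasStrictDerivAt 0 t).hasDerivAt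
  exact h.congr_of_eventuallyEq (by filter_upwards with u; rw [hφ' u])

/-- Linear lower bound for `φ` on `[1, ∞)`. -/
private lemma aux_lb_pos (hconv : StrictConvexOn ℝ Set.univ Λ) (h0 : Λ 0 = 0)
    (hcont : Continuous (auxF Λ))
    (hφ' : ∀ t, φ t = ∫ τ in (0:ℝ)..t, auxF Λ τ)
    {s : ℝ} (hs : 1 ≤ s) : φ 1 + (s - 1) * Λ 1 ≤ φ s := by
  have hdiffint : φ s - φ 1 = ∫ τ in (1:ℝ)..s, auxF Λ τ := by
    rw [hφ' s, hφ' 1,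
      intervalIntegral.integral_interval_sub_left (hcont.intervalIntegrable 0 s)
        (hcont.intervalIntegrable 0 1)]
  have hmono : ∀ τ ∈ Set.Icc (1:ℝ) s, Λ 1 ≤ auxF Λ τ := by
    rintro τ ⟨h1τ, _⟩
    have hτp : (0:ℝ) < τ := by linarith
    have hτ0 : τ ≠ 0 := ne_of_gt hτp
    have ha : (0:ℝ) ≤ 1/τ := by positivity
    have ha1 : 1/τ ≤ 1 := by rw [div_le_one hτp]; linarith
    have key := hconv.convexOn.2 (Set.mem_univ τ) (Set.mem_univ 0) ha
      (show (0:ℝ) ≤ 1 - 1/τ by linarith) (by ring)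
    have h1' : (1/τ) • τ + (1 - 1/τ) • (0:ℝ) = 1 := by
      simp only [smul_eq_mul]; field_simp; ring
    rw [h1'] at key
    simp only [smul_eq_mul, h0, mul_zero, add_zero] at key
    have : Λ 1 ≤ Λ τ / τ := by
      rw [div_eq_inv_mul]
      calc Λ 1 ≤ 1/τ * Λ τ := key
        _ = τ⁻¹ * Λ τ := by rw [one_div]
    simpa [auxF, hτ0] using this
  have hint : ∫ τ in (1:ℝ)..s, (Λ 1 : ℝ) ≤ ∫ τ in (1:ℝ)..s, auxF Λ τ :=
    intervalIntegral.integral_mono_on hs (intervalIntegrable_const)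
      (hcont.intervalIntegrable 1 s) hmono
  rw [intervalIntegral.integral_const, smul_eq_mul] at hint
  linarith

/-- Linear lower bound for `φ` on `(-∞, b]` for `b < 0`. -/
private lemma aux_lb_neg (hconv : StrictConvexOn ℝ Set.univ Λ) (h0 : Λ 0 = 0)
    (hcont : Continuous (auxF Λ))
    (hφ' : ∀ t, φ t = ∫ τ in (0:ℝ)..t, auxF Λ τ)
    {b s : ℝ} (hb : b < 0) (hs : s ≤ b) : φ b - (b - s) * auxF Λ b ≤ φ s := by
  have hdiffint : φ b - φ s = ∫ τ in s..b, auxF Λ τ := by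
    rw [hφ' s, hφ' b,
      intervalIntegral.integral_interval_sub_left (hcont.intervalIntegrable 0 b)
        (hcont.intervalIntegrable 0 s)]
  have hmono : ∀ τ ∈ Set.Icc s b, auxF Λ τ ≤ auxF Λ b := by
    rintro τ ⟨hsτ, hτb⟩
    have hτn : τ < 0 := lt_of_le_of_lt hτb hb
    have hτ0 : τ ≠ 0 := ne_of_lt hτn
    have ha : (0:ℝ) < b/τ := div_pos_of_neg_of_neg hb hτn
    have ha1 : b/τ ≤ 1 := by rw [div_le_one_of_neg hτn]; linarith
    have key := hconv.convexOn.2 (Set.mem_univ τ) (Set.mem_univ 0) (le_of_lt ha)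
      (show (0:ℝ) ≤ 1 - b/τ by linarith) (by ring)
    have h1' : (b/τ) • τ + (1 - b/τ) • (0:ℝ) = b := by
      simp only [smul_eq_mul]; field_simp; ring
    rw [h1'] at key
    simp only [smul_eq_mul, h0, mul_zero, add_zero] at key
    -- key : Λ b ≤ b/τ * Λ τ ;  divide by b < 0
    have hb0 : b ≠ 0 := ne_of_lt hb
    have key2 : Λ τ * b ≤ Λ b * τ := by
      have h3 : b / τ * Λ τ * τ = b * Λ τ := by field_simp
      nlinarith [mul_le_mul_of_nonpos_right key (le_of_lt hτn)]
    have hdiv : Λ τ / τ ≤ Λ b / b := by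
      have h4 : Λ b / b - Λ τ / τ = (Λ b * τ - Λ τ * b)/(b*τ) := by
        field_simp
      have h5 : (0:ℝ) ≤ (Λ b * τ - Λ τ * b)/(b*τ) :=
        div_nonneg (by linarith) (le_of_lt (mul_pos_of_neg_of_neg hb hτn))
      linarith
    simpa [auxF, hτ0, hb0] using hdiv
  have hint : ∫ τ in s..b, auxF Λ τ ≤ ∫ τ in s..b, (auxF Λ b : ℝ) :=
    intervalIntegral.integral_mono_on hs (hcont.intervalIntegrable s b)
      (intervalIntegrable_const) hmono
  rw [intervalIntegral.integral_const, smul_eq_mul] at hint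
  linarith

end AuxIdenticalAgents

section AuxIdenticalAgents2

variable {Λ : ℝ → ℝ} {t0 : ℝ} {φ : ℝ → ℝ}

private lemma auxF_sign_pos (hconv : StrictConvexOn ℝ Set.univ Λ) (h0 : Λ 0 = 0)
    (hd : 0 < deriv Λ 0) (ht0 : t0 < 0) (hzero : Λ t0 = 0) {t : ℝ} (ht : t0 < t) :
    0 < auxF Λ t := by
  rcases lt_trichotomy t 0 with h|h|h
  · have hΛ : Λ t < 0 := aux_neg_mid hconv h0 ht0 hzero ht h
    simp only [auxF, if_neg (ne_of_lt h)]
    exact div_pos_of_neg_of_neg hΛ h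
  · subst h; simpa [auxF] using hd
  · simp only [auxF, if_neg (ne_of_gt h)]
    exact div_pos (aux_pos_pos hconv h0 ht0 hzero h) h

private lemma auxF_sign_neg (hconv : StrictConvexOn ℝ Set.univ Λ) (h0 : Λ 0 = 0)
    (ht0 : t0 < 0) (hzero : Λ t0 = 0) {t : ℝ} (ht : t < t0) :
    auxF Λ t < 0 := by
  have htn : t < 0 := lt_trans ht ht0
  simp only [auxF, if_neg (ne_of_lt htn)]
  exact div_neg_of_pos_of_neg (aux_pos_neg hconv h0 ht0 hzero ht) htn

private lemma phi_strict_min (hconv : StrictConvexOn ℝ Set.univ Λ) (h0 : Λ 0 = 0)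
    (hd : 0 < deriv Λ 0) (ht0 : t0 < 0) (hzero : Λ t0 = 0)
    (hcont : Continuous (auxF Λ))
    (hφ' : ∀ t, φ t = ∫ τ in (0:ℝ)..t, auxF Λ τ) :
    ∀ t, t ≠ t0 → φ t0 < φ t := by
  have hder := auxF_deriv hcont hφ'
  have hφdiff : Differentiable ℝ φ := fun t => (hder t).differentiableAt
  have hderiv : ∀ t, deriv φ t = auxF Λ t := fun t => (hder t).deriv
  have hmono : StrictMonoOn φ (Set.Ici t0) :=
    strictMonoOn_of_deriv_pos (convex_Ici t0) hφdiff.continuous.continuousOn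
      (fun x hx => by
        rw [interior_Ici] at hx
        rw [hderiv]
        exact auxF_sign_pos hconv h0 hd ht0 hzero hx)
  have hanti : StrictAntiOn φ (Set.Iic t0) :=
    strictAntiOn_of_deriv_neg (convex_Iic t0) hφdiff.continuous.continuousOn
      (fun x hx => by
        rw [interior_Iic] at hx
        rw [hderiv]
        exact auxF_sign_neg hconv h0 ht0 hzero hx)
  intro t ht
  rcases lt_or_gt_of_ne ht with h|h
  · exact hanti (Set.mem_Iic.mpr (le_of_lt h)) (Set.mem_Iic.mpr le_rfl) h
  · exact hmono Set.self_mem_Ici (Set.mem_Ici.mpr (le_of_lt h)) h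

private lemma phi_coercive (hconv : StrictConvexOn ℝ Set.univ Λ) (h0 : Λ 0 = 0)
    (ht0 : t0 < 0) (hzero : Λ t0 = 0)
    (hcont : Continuous (auxF Λ))
    (hφ' : ∀ t, φ t = ∫ τ in (0:ℝ)..t, auxF Λ τ) (M : ℝ) :
    ∃ R, 0 < R ∧ ∀ s : ℝ, R ≤ |s| → M ≤ φ s := by
  have hc1 : 0 < Λ 1 := aux_pos_pos hconv h0 ht0 hzero one_pos
  set b : ℝ := t0 - 1 with hbdef
  have hbneg : b < 0 := by simp only [hbdef]; linarith
  have hcb : auxF Λ b < 0 := auxF_sign_neg hconv h0 ht0 hzero (by simp only [hbdef]; linarith)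
  set cb : ℝ := auxF Λ b with hcbdef
  refine ⟨max (max 1 ((M - φ 1)/Λ 1 + 1)) (max (1 - t0) ((M - φ b)/(-cb) - b + 1)), ?_, ?_⟩
  · exact lt_of_lt_of_le one_pos (le_trans (le_max_left _ _) (le_max_left _ _))
  · intro s hs
    rcases le_or_gt 0 s with hpos | hneg
    · rw [abs_of_nonneg hpos] at hs
      have hs1 : 1 ≤ s := le_trans (le_trans (le_max_left _ _) (le_max_left _ _)) hs
      have hs2 : (M - φ 1)/Λ 1 + 1 ≤ s :=
        le_trans (le_trans (le_max_right _ _) (le_max_left _ _)) hs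
      have hkey := aux_lb_pos hconv h0 hcont hφ' hs1
      have : M - φ 1 ≤ (s - 1) * Λ 1 :=
        (div_le_iff₀ hc1).mp (by linarith)
      linarith
    · rw [abs_of_neg hneg] at hs
      have hsb : s ≤ b := by
        have : 1 - t0 ≤ -s := le_trans (le_trans (le_max_left _ _) (le_max_right _ _)) hs
        simp only [hbdef]; linarith
      have hs2 : (M - φ b)/(-cb) - b + 1 ≤ -s :=
        le_trans (le_trans (le_max_right _ _) (le_max_right _ _)) hs
      have hkey := aux_lb_neg hconv h0 hcont hφ' hbneg hsb
      have hncb : 0 < -cb := by linarith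
      have hd2 : (M - φ b)/(-cb) ≤ b - s := by linarith
      have : M - φ b ≤ (b - s) * (-cb) := (div_le_iff₀ hncb).mp hd2
      have heq : (b - s) * (-cb) = -((b - s) * cb) := by ring
      linarith

end AuxIdenticalAgents2

/-- Distributed detection (identical agents): if all `N` agents share the same LMGF `Λ`
(strictly convex, `Λ 0 = 0`, `Λ'(0) > 0`, unique negative zero `t₀`), then the uniform
weights `π = (1/N)𝟙` are the unique maximizer of `Φ(π) = -inf_t ∑_k φ(π_k t)`, and the
maximal value is `N * Φ₁` with `Φ₁ = -inf_t φ(t)`. -/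
theorem identical_agents_uniform_optimal (N : ℕ) (hN : 0 < N)
    (Λ : ℝ → ℝ)
    (hconv : StrictConvexOn ℝ Set.univ Λ)
    (hdiff : Differentiable ℝ Λ)
    (h0 : Λ 0 = 0) (hd : 0 < deriv Λ 0)
    (t0 : ℝ) (ht0 : t0 < 0) (hzero : Λ t0 = 0)
    (huniq : ∀ t : ℝ, t < 0 → Λ t = 0 → t = t0)
    (φ : ℝ → ℝ) (hφ : ∀ t, φ t = ∫ τ in (0 : ℝ)..t, Λ τ / τ)
    (Φ1 : ℝ) (hΦ1 : Φ1 = -(⨅ t : ℝ, φ t)) :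
    (-(⨅ t : ℝ, ∑ _k : Fin N, φ ((1 / (N : ℝ)) * t)) = N * Φ1) ∧
      (∀ π : Fin N → ℝ, (∀ k, 0 < π k) → (∑ k, π k = 1) →
        π ≠ (fun _ => 1 / (N : ℝ)) →
        -(⨅ t : ℝ, ∑ k, φ (π k * t)) < N * Φ1) := by
  have hNR : (0:ℝ) < (N:ℝ) := Nat.cast_pos.mpr hN
  have hN0 : (N:ℝ) ≠ 0 := ne_of_gt hNR
  have hcont : Continuous (auxF Λ) := auxF_cont hdiff h0
  have hφ' : ∀ t, φ t = ∫ τ in (0:ℝ)..t, auxF Λ τ := auxF_phi φ hφ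
  have hstrict : ∀ t, t ≠ t0 → φ t0 < φ t :=
    phi_strict_min hconv h0 hd ht0 hzero hcont hφ'
  have hmin : ∀ t, φ t0 ≤ φ t := by
    intro t
    rcases eq_or_ne t t0 with rfl | h
    · exact le_rfl
    · exact le_of_lt (hstrict t h)
  have hφcont : Continuous φ := by
    have h := auxF_deriv hcont hφ'
    have hD : Differentiable ℝ φ := fun t => (h t).differentiableAt
    exact hD.continuous
  -- the single-agent infimum
  have hinfφ : (⨅ t : ℝ, φ t) = φ t0 :=
    le_antisymm (ciInf_le ⟨φ t0, by rintro y ⟨t, rfl⟩; exact hmin t⟩ t0) (le_ciInf hmin)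
  have hΦ1' : Φ1 = -φ t0 := by rw [hΦ1, hinfφ]
  -- Part 1
  have hsumconst : ∀ t : ℝ, (∑ _k : Fin N, φ ((1 / (N:ℝ)) * t)) = (N:ℝ) * φ ((1 / (N:ℝ)) * t) := by
    intro t
    rw [Finset.sum_const, Finset.card_univ, Fintype.card_fin, nsmul_eq_mul]
  have hbdd1 : BddBelow (Set.range fun t : ℝ => ∑ _k : Fin N, φ ((1 / (N:ℝ)) * t)) := by
    refine ⟨(N:ℝ) * φ t0, ?_⟩
    rintro y ⟨t, rfl⟩
    simp only [hsumconst]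
    exact mul_le_mul_of_nonneg_left (hmin _) (le_of_lt hNR)
  have hA : (⨅ t : ℝ, ∑ _k : Fin N, φ ((1 / (N:ℝ)) * t)) = (N:ℝ) * φ t0 := by
    refine le_antisymm ?_ (le_ciInf fun t => by
      rw [hsumconst t]
      exact mul_le_mul_of_nonneg_left (hmin _) (le_of_lt hNR))
    have := ciInf_le hbdd1 ((N:ℝ) * t0)
    have harg : (1 / (N:ℝ)) * ((N:ℝ) * t0) = t0 := by field_simp
    rwa [hsumconst, harg] at this
  constructor
  · rw [hA, hΦ1']; ring
  -- Part 2
  · intro π hπpos hπsum hπne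
    set G : ℝ → ℝ := fun t => ∑ k, φ (π k * t) with hGdef
    have hGconst : (∑ _k : Fin N, φ t0) = (N:ℝ) * φ t0 := by
      rw [Finset.sum_const, Finset.card_univ, Fintype.card_fin, nsmul_eq_mul]
    have hGmin : ∀ t, (N:ℝ) * φ t0 < G t := by
      intro t
      obtain ⟨k, hk⟩ : ∃ k : Fin N, π k * t ≠ t0 := by
        by_contra h
        push_neg at h
        have ht_ne : t ≠ 0 := by
          intro h0'
          have h1 := h ⟨0, hN⟩
          rw [h0', mul_zero] at h1
          exact absurd h1.symm (ne_of_lt ht0)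
        have hπk : ∀ k, π k = t0 / t := fun k => by
          rw [eq_div_iff ht_ne]; exact h k
        have hsum2 : (N:ℝ) * (t0 / t) = 1 := by
          calc (N:ℝ) * (t0 / t) = ∑ _k : Fin N, t0 / t := by
                rw [Finset.sum_const, Finset.card_univ, Fintype.card_fin, nsmul_eq_mul]
            _ = ∑ k, π k := by
                refine Finset.sum_congr rfl fun k _ => (hπk k).symm
            _ = 1 := hπsum
        apply hπne
        funext k
        rw [hπk k]
        field_simp at hsum2 ⊢
        linarith
      have hlt : (∑ _k : Fin N, φ t0) < ∑ k, φ (π k * t) :=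
        Finset.sum_lt_sum (fun i _ => hmin _) ⟨k, Finset.mem_univ k, hstrict _ hk⟩
      calc (N:ℝ) * φ t0 = ∑ _k : Fin N, φ t0 := hGconst.symm
        _ < G t := hlt
    set k0 : Fin N := ⟨0, hN⟩ with hk0def
    have hGlow : ∀ t, φ (π k0 * t) - φ t0 + (N:ℝ) * φ t0 ≤ G t := by
      intro t
      have h1 : φ (π k0 * t) - φ t0 ≤ ∑ k, (φ (π k * t) - φ t0) :=
        Finset.single_le_sum (f := fun k => φ (π k * t) - φ t0)
          (fun i _ => sub_nonneg.mpr (hmin _)) (Finset.mem_univ k0)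
      have h2 : (∑ k, (φ (π k * t) - φ t0)) = G t - (N:ℝ) * φ t0 := by
        rw [Finset.sum_sub_distrib, hGdef]
        rw [Finset.sum_const, Finset.card_univ, Fintype.card_fin, nsmul_eq_mul]
      linarith
    obtain ⟨R, hRpos, hRs⟩ := phi_coercive hconv h0 ht0 hzero hcont hφ' (φ t0 + 1)
    have hπk0 : 0 < π k0 := hπpos k0
    set R' : ℝ := R / π k0 with hR'def
    have hR'pos : 0 < R' := div_pos hRpos hπk0
    have hGcont : Continuous G := by
      apply continuous_finset_sum
      intro k _
      exact hφcont.comp (continuous_const.mul continuous_id)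
    obtain ⟨tm, htm, htmin⟩ := (isCompact_Icc (a := -R') (b := R')).exists_isMinOn
      ⟨0, by constructor <;> linarith⟩ hGcont.continuousOn
    set c : ℝ := min (G tm) ((N:ℝ) * φ t0 + 1) with hcdef
    have hcl : (N:ℝ) * φ t0 < c := lt_min (hGmin tm) (by linarith)
    have hlb : ∀ t, c ≤ G t := by
      intro t
      by_cases hcase : |t| ≤ R'
      · have htmem : t ∈ Set.Icc (-R') R' := by
          rcases abs_le.mp hcase with ⟨h1, h2⟩
          exact ⟨h1, h2⟩
        exact le_trans (min_le_left _ _) (htmin htmem)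
      · push_neg at hcase
        have habs : R ≤ |π k0 * t| := by
          rw [abs_mul, abs_of_pos hπk0]
          calc R = π k0 * R' := by rw [hR'def]; field_simp
            _ ≤ π k0 * |t| := mul_le_mul_of_nonneg_left (le_of_lt hcase) (le_of_lt hπk0)
        have hφlow := hRs (π k0 * t) habs
        have := hGlow t
        refine le_trans (min_le_right _ _) ?_
        linarith
    have hInfG : c ≤ ⨅ t : ℝ, G t := le_ciInf hlb
    have hfin : -(⨅ t : ℝ, G t) < (N:ℝ) * Φ1 := by
      rw [hΦ1']
      have : (N:ℝ) * -φ t0 = -((N:ℝ) * φ t0) := by ring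
      rw [this]
      have := lt_of_lt_of_le hcl hInfG
      linarith
    exact hfin
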